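/- Let ν be a valuation on K[x]. For any two non-constant polynomials f, g ∈ K[x], one has ε(fg) = max{ε(f), ε(g)}. Moreover, if ε(f) < ε(g) < ∞, then I(fg) = I(g). -/

import Mathlib

open Polynomial

namespace KeyPolPaper

variable {K : Type*} [Field K] {Λ : Type*} [AddCommGroup Λ] [LinearOrder Λ] [IsOrderedAddMonoid Λ]

/-- A valuation on `F[X]` with values in `Λ ∪ {∞}`: multiplicative, satisfies the
ultrametric inequality, and is finite on nonzero constants. -/
def IsValuation {F : Type*} [Field F] (w : F[X] → WithTop Λ) : Prop :=
  w 0 = ⊤ ∧ (∀ f g : F[X], w (f * g) = w f + w g) ∧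
    (∀ f g : F[X], min (w f) (w g) ≤ w (f + g)) ∧
    ∀ a : F, a ≠ 0 → w (C a) ≠ ⊤

/-- `μ ≤ ν` for valuations on `K[X]`. -/
def ValLE (μ ν : K[X] → WithTop Λ) : Prop := ∀ f : K[X], μ f ≤ ν f

/-- `μ < ν` for valuations on `K[X]`. -/
def ValLT (μ ν : K[X] → WithTop Λ) : Prop := ValLE μ ν ∧ μ ≠ ν

/-- ν-equivalence: `f ∼_ν g` iff `ν (f - g) > ν f`. -/
def VEquiv (ν : K[X] → WithTop Λ) (f g : K[X]) : Prop := ν f < ν (f - g)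

/-- ν-divisibility: `h ∣_ν g` iff `g ∼_ν q * h` for some `q`. -/
def VDvd (ν : K[X] → WithTop Λ) (h g : K[X]) : Prop := ∃ q : K[X], VEquiv ν g (q * h)

/-- MacLane–Vaquié key polynomial: monic, ν-minimal and ν-irreducible. -/
def IsMLVKey (ν : K[X] → WithTop Λ) (φ : K[X]) : Prop :=
  φ.Monic ∧ (∀ f : K[X], f ≠ 0 → f.natDegree < φ.natDegree → ¬ VDvd ν φ f) ∧
    ¬ VDvd ν φ 1 ∧ ∀ f g : K[X], VDvd ν φ (f * g) → VDvd ν φ f ∨ VDvd ν φ g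

/-- `e` is the value `ε(f) = max_{b ≥ 1} (ν f - ν (∂_b f)) / b`; phrased multiplicatively,
`e` satisfies `ν f ≤ ν (∂_b f) + b • e` for all `b ≥ 1`, with equality for some `b ≥ 1`.
If `ν f = ∞` then `ε(f) = ∞`. -/
def IsEps (ν : K[X] → WithTop Λ) (f : K[X]) (e : WithTop Λ) : Prop :=
  (ν f = ⊤ ∧ e = ⊤) ∨
    (ν f ≠ ⊤ ∧ (∀ b : ℕ, 1 ≤ b → ν f ≤ ν (hasseDeriv b f) + b • e) ∧
      ∃ b : ℕ, 1 ≤ b ∧ ν f = ν (hasseDeriv b f) + b • e)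

/-- The invariant `ε(f)`; well defined (for non-constant `f`) since `Λ` is divisible and
the defining property determines `e` uniquely. -/
noncomputable def eps (ν : K[X] → WithTop Λ) (f : K[X]) : WithTop Λ :=
  letI := Classical.propDecidable (∃ e : WithTop Λ, IsEps ν f e)
  if h : ∃ e : WithTop Λ, IsEps ν f e then h.choose else ⊤

/-- The set `I(f)` of indices `b ≥ 1` with `ν (∂_b f) = ν f - b • ε(f)`. -/
def epsAttain (ν : K[X] → WithTop Λ) (f : K[X]) : Set ℕ :=
  {b : ℕ | 1 ≤ b ∧ ν f = ν (hasseDeriv b f) + b • eps ν f}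

/-- Abstract key polynomial for `ν`. -/
def IsKeyPoly (ν : K[X] → WithTop Λ) (Q : K[X]) : Prop :=
  Q.Monic ∧ 0 < Q.natDegree ∧
    ∀ f : K[X], 0 < f.natDegree → f.natDegree < Q.natDegree → eps ν f < eps ν Q

/-- The `s`-th coefficient of the canonical `Q`-expansion `f = Σ_s a_s Q^s`,
`deg a_s < deg Q`. -/
noncomputable def qCoeff (Q f : K[X]) (s : ℕ) : K[X] := ((· /ₘ Q)^[s] f) %ₘ Q

/-- The truncation `ν_Q (f) = min_s ν (a_s Q^s)`. -/
noncomputable def trunc (ν : K[X] → WithTop Λ) (Q f : K[X]) : WithTop Λ :=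
  (Finset.range (f.natDegree + 1)).inf fun s => ν (qCoeff Q f s * Q ^ s)

/-- `S_{ν,Q}(f)`: the set of indices attaining the minimum in `ν_Q(f)`. -/
def attain (ν : K[X] → WithTop Λ) (Q f : K[X]) : Set ℕ :=
  {s : ℕ | ν (qCoeff Q f s * Q ^ s) = trunc ν Q f}

/-- The augmented valuation `[μ; φ, γ] (f) = min_s (μ (a_s) + s • γ)` on φ-expansions. -/
noncomputable def augVal (μ : K[X] → WithTop Λ) (φ : K[X]) (γ : WithTop Λ) (f : K[X]) :
    WithTop Λ :=
  (Finset.range (f.natDegree + 1)).inf fun s => μ (qCoeff φ f s) + s • γ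

/-- `Φ_{μ,ν}`: monic polynomials of minimal degree with `μ φ < ν φ`. -/
def PhiSet (μ ν : K[X] → WithTop Λ) : Set K[X] :=
  {φ : K[X] | φ.Monic ∧ μ φ < ν φ ∧
    ∀ ψ : K[X], ψ.Monic → μ ψ < ν ψ → φ.natDegree ≤ ψ.natDegree}

/-- `mult f`: the least `b ≥ 1` with `∂_b f ≠ 0`. -/
noncomputable def multOf (f : K[X]) : ℕ := sInf {b : ℕ | 1 ≤ b ∧ hasseDeriv b f ≠ 0}

/-- Abstract limit key polynomial for `ν` (conditions (K1)-(K4)). -/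
def IsLimitKeyPoly (ν : K[X] → WithTop Λ) (Q : K[X]) : Prop :=
  Q.Monic ∧
    ∃ Qm : K[X], IsKeyPoly ν Qm ∧ ValLT (trunc ν Qm) ν ∧
      (∃ χ ∈ PhiSet (trunc ν Qm) ν, Qm.natDegree = χ.natDegree) ∧
      (∀ χ ∈ PhiSet (trunc ν Qm) ν, ∃ χ' ∈ PhiSet (trunc ν Qm) ν, ν χ < ν χ') ∧
      (∀ χ ∈ PhiSet (trunc ν Qm) ν, trunc ν χ Q < ν Q) ∧
      ∀ Q' : K[X], Q'.Monic →
        (∀ χ ∈ PhiSet (trunc ν Qm) ν, trunc ν χ Q' < ν Q') → Q.natDegree ≤ Q'.natDegree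

/-- A continuous MacLane chain of stable degree `m`: valuations `ρ_0 < ρ_1 < ⋯`,
monic key polynomials `χ_i` (for `i ≥ 1`) of degree `m`, with
`ρ_i = [ρ_{i-1}; χ_i, β_i]`, `β_i = ρ_i (χ_i) > ρ_{i-1} (χ_i)` and
`χ_{i+1} ∤_{ρ_i} χ_i`. -/
structure MacLaneChain (K : Type*) [Field K] (Λ : Type*) [AddCommGroup Λ] [LinearOrder Λ] [IsOrderedAddMonoid Λ] where
  m : ℕ
  hm : 0 < m
  ρ : ℕ → K[X] → WithTop Λ
  χ : ℕ → K[X]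
  β : ℕ → Λ
  isVal : ∀ i : ℕ, IsValuation (ρ i)
  mono : ∀ i : ℕ, ValLT (ρ i) (ρ (i + 1))
  monicChi : ∀ i : ℕ, (χ (i + 1)).Monic
  degChi : ∀ i : ℕ, (χ (i + 1)).natDegree = m
  keyChi : ∀ i : ℕ, IsMLVKey (ρ i) (χ (i + 1))
  beta_def : ∀ i : ℕ, ρ (i + 1) (χ (i + 1)) = (β (i + 1) : WithTop Λ)
  beta_lt : ∀ i : ℕ, ρ i (χ (i + 1)) < (β (i + 1) : WithTop Λ)
  aug : ∀ i : ℕ, ρ (i + 1) = augVal (ρ i) (χ (i + 1)) (β (i + 1) : WithTop Λ)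
  not_dvd : ∀ i : ℕ, ¬ VDvd (ρ (i + 1)) (χ (i + 2)) (χ (i + 1))

/-- A polynomial is stable w.r.t. the chain if its values `ρ_i f` are eventually constant. -/
def MacLaneChain.Stable (ch : MacLaneChain K Λ) (f : K[X]) : Prop :=
  ∃ i0 : ℕ, ∀ i : ℕ, i0 ≤ i → ch.ρ i f = ch.ρ i0 f

/-- The chain is essential: non-stable polynomials exist and all have degree `> m`. -/
def MacLaneChain.Essential (ch : MacLaneChain K Λ) : Prop :=
  (∃ f : K[X], ¬ ch.Stable f) ∧ ∀ f : K[X], ¬ ch.Stable f → ch.m < f.natDegree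

/-- MLV limit key polynomials of the chain: monic non-stable polynomials of minimal
degree `m_∞`. -/
def MacLaneChain.IsLimKP (ch : MacLaneChain K Λ) (φ : K[X]) : Prop :=
  φ.Monic ∧ ¬ ch.Stable φ ∧ ∀ f : K[X], ¬ ch.Stable f → φ.natDegree ≤ f.natDegree

/-- Convex subgroup of a linearly ordered abelian group. -/
def IsConvexSubgroup (H : AddSubgroup Λ) : Prop :=
  ∀ x y : Λ, 0 < x → x < y → y ∈ H → x ∈ H

/-- The value group of a valuation: the subgroup of `Λ` generated by the finite values. -/
def valueGroup {F : Type*} [Field F] (ρ : F[X] → WithTop Λ) : AddSubgroup Λ :=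
  AddSubgroup.closure {γ : Λ | ∃ f : F[X], ρ f = (γ : WithTop Λ)}


variable [Module ℚ Λ]

/-! ### Auxiliary lemmas for `stmt1` -/

section Stmt1Aux

lemma wt_coe_nsmul (n : ℕ) (a : Λ) : ((n • a : Λ) : WithTop Λ) = n • (a : WithTop Λ) := by
  induction n with
  | zero => simp
  | succ k ih => rw [succ_nsmul, succ_nsmul, WithTop.coe_add, ih]

lemma wt_nsmul_top {n : ℕ} (hn : n ≠ 0) : n • (⊤ : WithTop Λ) = ⊤ := by
  cases n with
  | zero => exact absurd rfl hn
  | succ k => rw [succ_nsmul, add_top]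

lemma wt_nsmul_ne_top {n : ℕ} {a : WithTop Λ} (ha : a ≠ ⊤) : n • a ≠ ⊤ := by
  lift a to Λ using ha
  rw [← wt_coe_nsmul]
  exact WithTop.coe_ne_top

lemma wt_nsmul_le (n : ℕ) {a b : WithTop Λ} (h : a ≤ b) : n • a ≤ n • b := by
  induction n with
  | zero => simp
  | succ k ih => rw [succ_nsmul, succ_nsmul]; exact add_le_add ih h

lemma wt_nsmul_lt {n : ℕ} (hn : n ≠ 0) {a b : WithTop Λ} (ha : a ≠ ⊤) (h : a < b) :
    n • a < n • b := by
  lift a to Λ using ha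
  rcases eq_or_ne b ⊤ with rfl | hb
  · rw [wt_nsmul_top hn, ← wt_coe_nsmul]
    exact WithTop.coe_lt_top _
  · lift b to Λ using hb
    rw [← wt_coe_nsmul, ← wt_coe_nsmul, WithTop.coe_lt_coe]
    exact nsmul_lt_nsmul_right hn (WithTop.coe_lt_coe.mp h)

lemma wt_add_lt_add {a b c d : WithTop Λ} (ha : a ≠ ⊤) (hc : c ≠ ⊤) (h1 : a < b)
    (h2 : c ≤ d) : a + c < b + d := by
  rcases eq_or_ne d ⊤ with rfl | hd
  · rw [add_top]
    exact lt_top_iff_ne_top.mpr (WithTop.add_ne_top.mpr ⟨ha, hc⟩)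
  · calc a + c ≤ a + d := add_le_add_right h2 a
      _ < b + d := WithTop.add_lt_add_right hd h1

variable {ν : K[X] → WithTop Λ}

lemma val_one (hν : IsValuation ν) : ν 1 = 0 := by
  have h1 : ν 1 ≠ ⊤ := by simpa using hν.2.2.2 1 one_ne_zero
  have hm := hν.2.1 1 1
  rw [one_mul] at hm
  lift ν 1 to Λ using h1 with u hu
  have : u = u + u := by exact_mod_cast hm
  exact_mod_cast (left_eq_add.mp this)

lemma val_neg (hν : IsValuation ν) (a : K[X]) : ν (-a) = ν a := by
  have hCne : ν (C (-1 : K)) ≠ ⊤ := hν.2.2.2 _ (by norm_num)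
  have hCsq : ν (C (-1 : K)) + ν (C (-1 : K)) = 0 := by
    have := hν.2.1 (C (-1 : K)) (C (-1 : K))
    rw [← C_mul, neg_mul_neg, one_mul, map_one, val_one hν] at this
    exact this.symm
  have hC0 : ν (C (-1 : K)) = 0 := by
    lift ν (C (-1 : K)) to Λ using hCne with u hu
    have h2 : u + u = 0 := by exact_mod_cast hCsq
    have : u = 0 := by
      rcases lt_trichotomy u 0 with h | h | h
      · exact absurd (h2 ▸ add_lt_add h h) (by simp)
      · exact h
      · exact absurd (h2 ▸ add_lt_add h h) (by simp)
    exact_mod_cast this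
  have : -a = C (-1 : K) * a := by
    rw [map_neg, map_one, neg_one_mul]
  rw [this, hν.2.1, hC0, zero_add]

lemma val_add_left (hν : IsValuation ν) {a b : K[X]} (h : ν a < ν b) : ν (a + b) = ν a := by
  have h1 : ν a ≤ ν (a + b) := le_trans (le_min le_rfl h.le) (hν.2.2.1 a b)
  have h2 : min (ν (a + b)) (ν b) ≤ ν a := by
    have := hν.2.2.1 (a + b) (-b)
    rw [add_neg_cancel_right, val_neg hν] at this
    exact this
  refine le_antisymm ?_ h1
  rcases le_or_gt (ν b) (ν (a + b)) with hle | hlt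
  · have : ν b ≤ ν a := by rwa [min_eq_right hle] at h2
    exact absurd this (not_le.mpr h)
  · rwa [min_eq_left hlt.le] at h2

lemma val_sum_ge (hν : IsValuation ν) {ι : Type*} (S : Finset ι) (t : ι → K[X])
    (x : WithTop Λ) (h : ∀ s ∈ S, x ≤ ν (t s)) : x ≤ ν (∑ s ∈ S, t s) := by
  classical
  induction S using Finset.induction_on with
  | empty => simp [hν.1]
  | @insert a S ha ih =>
    rw [Finset.sum_insert ha]
    refine le_trans (le_min (h a (Finset.mem_insert_self a S)) ?_) (hν.2.2.1 _ _)
    exact ih fun s hs => h s (Finset.mem_insert_of_mem hs)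

lemma val_sum_eq (hν : IsValuation ν) {ι : Type*} (S : Finset ι) (t : ι → K[X]) (s₀ : ι)
    (hs₀ : s₀ ∈ S) (h : ∀ s ∈ S, s ≠ s₀ → ν (t s₀) < ν (t s)) :
    ν (∑ s ∈ S, t s) = ν (t s₀) := by
  classical
  have hsum : ∑ s ∈ S, t s = t s₀ + ∑ s ∈ S.erase s₀, t s := (Finset.add_sum_erase S t hs₀).symm
  rcases (S.erase s₀).eq_empty_or_nonempty with he | hne
  · rw [hsum, he, Finset.sum_empty, add_zero]
  · obtain ⟨s₁, hs₁, hmin⟩ := Finset.exists_min_image (S.erase s₀) (fun s => ν (t s)) hne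
    have hlt : ν (t s₀) < ν (∑ s ∈ S.erase s₀, t s) :=
      lt_of_lt_of_le (h s₁ (Finset.mem_of_mem_erase hs₁) (Finset.ne_of_mem_erase hs₁))
        (val_sum_ge hν _ _ _ hmin)
    rw [hsum, val_add_left hν hlt]

lemma hasse_zero_of_gt {f : K[X]} {b : ℕ} (hb : f.natDegree < b) : hasseDeriv b f = 0 := by
  ext n
  rw [hasseDeriv_coeff, coeff_eq_zero_of_natDegree_lt (by omega), mul_zero, coeff_zero]

lemma hasse_natDegree (f : K[X]) : hasseDeriv f.natDegree f = C f.leadingCoeff := by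
  ext n
  rw [hasseDeriv_coeff]
  cases n with
  | zero => rw [zero_add, Nat.choose_self, Nat.cast_one, one_mul, coeff_C_zero, coeff_natDegree]
  | succ k =>
    rw [coeff_eq_zero_of_natDegree_lt (by omega), mul_zero, coeff_C]
    simp

lemma isEps_le (hν : IsValuation ν) {f : K[X]} {c e e' : WithTop Λ} {b : ℕ} (hx : ν f ≠ ⊤)
    (hb : 1 ≤ b) (heq : ν f = c + b • e) (hle : ν f ≤ c + b • e') : e ≤ e' := by
  by_contra hcon
  push_neg at hcon
  have hc : c ≠ ⊤ := fun h => hx (by rw [heq, h, top_add])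
  have he' : e' ≠ ⊤ := hcon.ne_top
  have hlt : c + b • e' < c + b • e :=
    WithTop.add_lt_add_left hc (wt_nsmul_lt (by omega) he' hcon)
  have : ν f < ν f := by
    calc ν f ≤ c + b • e' := hle
      _ < c + b • e := hlt
      _ = ν f := heq.symm
  exact lt_irrefl _ this

lemma isEps_unique (hν : IsValuation ν) {f : K[X]} {e e' : WithTop Λ} (h : IsEps ν f e)
    (h' : IsEps ν f e') : e = e' := by
  rcases h with ⟨hf, he⟩ | ⟨hf, hb, b, hb1, heq⟩
  · rcases h' with ⟨_, he'⟩ | ⟨hf', _⟩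
    · rw [he, he']
    · exact absurd hf hf'
  · rcases h' with ⟨hf', _⟩ | ⟨_, hb', b', hb1', heq'⟩
    · exact absurd hf' hf
    · exact le_antisymm (isEps_le hν hf hb1 heq (hb' b hb1))
        (isEps_le hν hf hb1' heq' (hb b' hb1'))

lemma eps_eq (hν : IsValuation ν) {f : K[X]} {e : WithTop Λ} (h : IsEps ν f e) :
    eps ν f = e := by
  have hex : ∃ e : WithTop Λ, IsEps ν f e := ⟨e, h⟩
  unfold eps
  rw [dif_pos hex]
  exact isEps_unique hν hex.choose_spec h

lemma isEps_eps (hν : IsValuation ν) {f : K[X]} (hex : ∃ e : WithTop Λ, IsEps ν f e) :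
    IsEps ν f (eps ν f) := by
  unfold eps
  rw [dif_pos hex]
  exact hex.choose_spec

lemma exists_isEps (hν : IsValuation ν) (f : K[X]) (hd : 0 < f.natDegree) :
    ∃ e : WithTop Λ, IsEps ν f e := by
  classical
  rcases eq_or_ne (ν f) ⊤ with hft | hft
  · exact ⟨⊤, Or.inl ⟨hft, rfl⟩⟩
  obtain ⟨α, hα⟩ := WithTop.ne_top_iff_exists.mp hft
  have hf0 : f ≠ 0 := by
    rintro rfl
    exact hft hν.1
  set n := f.natDegree with hn
  have hnt : ν (hasseDeriv n f) ≠ ⊤ := by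
    rw [hn, hasse_natDegree f]
    exact hν.2.2.2 _ (leadingCoeff_ne_zero.mpr hf0)
  set B : Finset ℕ := (Finset.range (n + 1)).filter
    (fun b => 1 ≤ b ∧ ν (hasseDeriv b f) ≠ ⊤) with hB
  have hnB : n ∈ B := by
    rw [hB, Finset.mem_filter, Finset.mem_range]
    exact ⟨by omega, by omega, hnt⟩
  have hBne : B.Nonempty := ⟨n, hnB⟩
  set δ : ℕ → Λ := fun b => (b : ℚ)⁻¹ • (α - WithTop.untopD 0 (ν (hasseDeriv b f))) with hδ
  have smul_δ : ∀ b ∈ B, b • δ b = α - WithTop.untopD 0 (ν (hasseDeriv b f)) := by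
    intro b hb
    have hb1 : 1 ≤ b := ((Finset.mem_filter.mp hb).2).1
    rw [hδ]
    dsimp only
    rw [← Nat.cast_smul_eq_nsmul ℚ, smul_smul,
      mul_inv_cancel₀ (by exact_mod_cast (by omega : b ≠ 0)), one_smul]
  set e : Λ := B.sup' hBne δ with he
  have key : ∀ b ∈ B, ν f ≤ ν (hasseDeriv b f) + b • (e : WithTop Λ) ∧
      (e = δ b → ν f = ν (hasseDeriv b f) + b • (e : WithTop Λ)) := by
    intro b hb
    have hbt : ν (hasseDeriv b f) ≠ ⊤ := ((Finset.mem_filter.mp hb).2).2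
    obtain ⟨c, hc⟩ := WithTop.ne_top_iff_exists.mp hbt
    have huntop : WithTop.untopD 0 (ν (hasseDeriv b f)) = c := by
      rw [← hc, WithTop.untopD_coe]
    have hkey : ∀ x : Λ, b • δ b ≤ b • x →
        ν f ≤ ν (hasseDeriv b f) + b • (x : WithTop Λ) := by
      intro x hx
      rw [smul_δ b hb, huntop] at hx
      have : α ≤ c + b • x := sub_le_iff_le_add'.mp hx
      rw [← hα, ← hc, ← wt_coe_nsmul, ← WithTop.coe_add, WithTop.coe_le_coe]
      exact this
    constructor
    · exact hkey e (nsmul_le_nsmul_right (Finset.le_sup' δ hb) b)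
    · intro hed
      have h1 : b • e = α - c := by rw [hed, smul_δ b hb, huntop]
      have : α = c + b • e := by rw [h1]; abel
      rw [← hα, ← hc, ← wt_coe_nsmul, ← WithTop.coe_add, WithTop.coe_eq_coe]
      exact this
  obtain ⟨b₀, hb₀B, hb₀⟩ := Finset.exists_mem_eq_sup' hBne δ
  refine ⟨(e : WithTop Λ), Or.inr ⟨hft, ?_, b₀, ((Finset.mem_filter.mp hb₀B).2).1,
    (key b₀ hb₀B).2 hb₀⟩⟩
  intro b hb1
  rcases eq_or_ne (ν (hasseDeriv b f)) ⊤ with hbt | hbt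
  · rw [hbt, top_add]
    exact le_top
  · have hble : b ≤ n := by
      by_contra hcon
      exact hbt (by rw [hasse_zero_of_gt (by omega)]; exact hν.1)
    have hbB : b ∈ B := by
      rw [hB, Finset.mem_filter, Finset.mem_range]
      exact ⟨by omega, hb1, hbt⟩
    exact (key b hbB).1

lemma eps_of_top (hν : IsValuation ν) {f : K[X]} (hft : ν f = ⊤) : eps ν f = ⊤ :=
  eps_eq hν (Or.inl ⟨hft, rfl⟩)

lemma isEps_elim (hν : IsValuation ν) {f : K[X]} (hft : ν f ≠ ⊤)
    (hex : ∃ e : WithTop Λ, IsEps ν f e) :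
    (∀ b : ℕ, 1 ≤ b → ν f ≤ ν (hasseDeriv b f) + b • eps ν f) ∧
      (∃ b : ℕ, 1 ≤ b ∧ ν f = ν (hasseDeriv b f) + b • eps ν f) ∧ eps ν f ≠ ⊤ := by
  rcases isEps_eps hν hex with ⟨hf, _⟩ | ⟨_, hb, b, hb1, heq⟩
  · exact absurd hf hft
  · refine ⟨hb, ⟨b, hb1, heq⟩, ?_⟩
    intro hcon
    rw [hcon] at heq
    exact hft (by rw [heq, wt_nsmul_top (by omega), add_top])

lemma bound_all (hν : IsValuation ν) {f : K[X]} (hft : ν f ≠ ⊤)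
    (hex : ∃ e : WithTop Λ, IsEps ν f e) {E : WithTop Λ} (hE : eps ν f ≤ E) :
    ∀ b : ℕ, ν f ≤ ν (hasseDeriv b f) + b • E := by
  intro b
  cases b with
  | zero => simp [hasseDeriv_zero']
  | succ k =>
    exact le_trans ((isEps_elim hν hft hex).1 _ (by omega))
      (add_le_add_right (wt_nsmul_le _ hE) _)

/-- Per-term bound in the Leibniz expansion of `∂_b (f*g)`. -/
lemma term_bound (hν : IsValuation ν) {f g : K[X]} (hft : ν f ≠ ⊤) (hgt : ν g ≠ ⊤)
    (hexf : ∃ e : WithTop Λ, IsEps ν f e) (hexg : ∃ e : WithTop Λ, IsEps ν g e)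
    {E : WithTop Λ} (hEf : eps ν f ≤ E) (hEg : eps ν g ≤ E) (i j : ℕ) :
    ν f + ν g ≤ (ν (hasseDeriv i f) + ν (hasseDeriv j g)) + (i + j) • E := by
  calc ν f + ν g
      ≤ (ν (hasseDeriv i f) + i • E) + (ν (hasseDeriv j g) + j • E) :=
        add_le_add (bound_all hν hft hexf hEf i) (bound_all hν hgt hexg hEg j)
    _ = (ν (hasseDeriv i f) + ν (hasseDeriv j g)) + (i + j) • E := by
        rw [add_nsmul, add_add_add_comm]

lemma mul_bound (hν : IsValuation ν) {f g : K[X]} (hft : ν f ≠ ⊤) (hgt : ν g ≠ ⊤)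
    (hexf : ∃ e : WithTop Λ, IsEps ν f e) (hexg : ∃ e : WithTop Λ, IsEps ν g e)
    {E : WithTop Λ} (hEf : eps ν f ≤ E) (hEg : eps ν g ≤ E) (b : ℕ) :
    ν (f * g) ≤ ν (hasseDeriv b (f * g)) + b • E := by
  have hne : (Finset.HasAntidiagonal.antidiagonal b).Nonempty := ⟨(0, b), by simp⟩
  obtain ⟨s₁, hs₁, hmin⟩ := Finset.exists_min_image (Finset.HasAntidiagonal.antidiagonal b)
    (fun ij => ν (hasseDeriv ij.1 f * hasseDeriv ij.2 g)) hne
  have hsum : ν (hasseDeriv b (f * g)) =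
      ν (∑ ij ∈ Finset.HasAntidiagonal.antidiagonal b, hasseDeriv ij.1 f * hasseDeriv ij.2 g) := by
    rw [hasseDeriv_mul]
  have hs₁b : s₁.1 + s₁.2 = b := Finset.HasAntidiagonal.mem_antidiagonal.mp hs₁
  calc ν (f * g) = ν f + ν g := hν.2.1 f g
    _ ≤ (ν (hasseDeriv s₁.1 f) + ν (hasseDeriv s₁.2 g)) + (s₁.1 + s₁.2) • E :=
        term_bound hν hft hgt hexf hexg hEf hEg s₁.1 s₁.2
    _ = ν (hasseDeriv s₁.1 f * hasseDeriv s₁.2 g) + b • E := by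
        rw [hν.2.1, hs₁b]
    _ ≤ ν (hasseDeriv b (f * g)) + b • E := by
        refine add_le_add_left ?_ _
        rw [hsum]
        exact val_sum_ge hν _ _ _ hmin

/-- In the strictly-smaller case, each `b ∈ I(g)` gives
`ν(∂_b(fg)) = ν f + ν(∂_b g)` and hence an equality index for `fg`. -/
lemma strict_term_lt (hν : IsValuation ν) {f g : K[X]} (hft : ν f ≠ ⊤) (hgt : ν g ≠ ⊤)
    (hexf : ∃ e : WithTop Λ, IsEps ν f e) (hexg : ∃ e : WithTop Λ, IsEps ν g e)
    (hlt : eps ν f < eps ν g) {i j : ℕ} (hi : 1 ≤ i) :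
    ν f + ν g < (ν (hasseDeriv i f) + ν (hasseDeriv j g)) + (i + j) • eps ν g := by
  have heft : eps ν f ≠ ⊤ := hlt.ne_top
  have hstrict : ν f < ν (hasseDeriv i f) + i • eps ν g := by
    rcases eq_or_ne (ν (hasseDeriv i f)) ⊤ with h | h
    · rw [h, top_add]
      exact lt_top_iff_ne_top.mpr hft
    · calc ν f ≤ ν (hasseDeriv i f) + i • eps ν f :=
          (isEps_elim hν hft hexf).1 i hi
        _ < ν (hasseDeriv i f) + i • eps ν g :=
          WithTop.add_lt_add_left h (wt_nsmul_lt (by omega) heft hlt)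
  calc ν f + ν g
      < (ν (hasseDeriv i f) + i • eps ν g) + (ν (hasseDeriv j g) + j • eps ν g) :=
        wt_add_lt_add hft hgt hstrict (bound_all hν hgt hexg le_rfl j)
    _ = (ν (hasseDeriv i f) + ν (hasseDeriv j g)) + (i + j) • eps ν g := by
        rw [add_nsmul, add_add_add_comm]

lemma main_strict (hν : IsValuation ν) {f g : K[X]} (hft : ν f ≠ ⊤) (hgt : ν g ≠ ⊤)
    (hexf : ∃ e : WithTop Λ, IsEps ν f e) (hexg : ∃ e : WithTop Λ, IsEps ν g e)
    (hlt : eps ν f < eps ν g) :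
    IsEps ν (f * g) (eps ν g) ∧ epsAttain ν (f * g) = epsAttain ν g := by
  obtain ⟨hbg, ⟨b₁, hb₁1, hb₁⟩, hegt⟩ := isEps_elim hν hgt hexg
  have hfgt : ν (f * g) ≠ ⊤ := by
    rw [hν.2.1]
    exact WithTop.add_ne_top.mpr ⟨hft, hgt⟩
  have hsmul_ne : ∀ b : ℕ, b • eps ν g ≠ ⊤ := fun b => wt_nsmul_ne_top hegt
  -- key computation: for b with ν g = ν (∂_b g) + b • eps g, the term (0, b) is the unique min
  have hkey : ∀ b : ℕ, 1 ≤ b → ν g = ν (hasseDeriv b g) + b • eps ν g →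
      ν (hasseDeriv b (f * g)) = ν f + ν (hasseDeriv b g) := by
    intro b hb1 hb
    rw [hasseDeriv_mul]
    have := val_sum_eq hν (Finset.HasAntidiagonal.antidiagonal b)
      (fun ij => hasseDeriv ij.1 f * hasseDeriv ij.2 g) (0, b) (by simp) ?_
    · rw [this, hν.2.1, hasseDeriv_zero']
    · rintro ⟨i, j⟩ hs hne
      have hij : i + j = b := Finset.HasAntidiagonal.mem_antidiagonal.mp hs
      have hi1 : 1 ≤ i := by
        rcases Nat.eq_zero_or_pos i with rfl | h
        · exact absurd (by simpa using hij) (by simpa using hne)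
        · exact h
      have h1 : (ν f + ν (hasseDeriv b g)) + b • eps ν g <
          (ν (hasseDeriv i f) + ν (hasseDeriv j g)) + b • eps ν g := by
        have := strict_term_lt hν hft hgt hexf hexg hlt (j := j) hi1
        rw [hij] at this
        calc (ν f + ν (hasseDeriv b g)) + b • eps ν g
            = ν f + (ν (hasseDeriv b g) + b • eps ν g) := by rw [add_assoc]
          _ = ν f + ν g := by rw [← hb]
          _ < (ν (hasseDeriv i f) + ν (hasseDeriv j g)) + b • eps ν g := this
      have h2 := (WithTop.add_lt_add_iff_right (hsmul_ne b)).mp h1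
      simpa only [hν.2.1, hasseDeriv_zero'] using h2
  -- equality witness for f*g at b₁
  have hwit : ∀ b : ℕ, 1 ≤ b → ν g = ν (hasseDeriv b g) + b • eps ν g →
      ν (f * g) = ν (hasseDeriv b (f * g)) + b • eps ν g := by
    intro b hb1 hb
    rw [hkey b hb1 hb, hν.2.1, add_assoc, ← hb]
  have hEps : IsEps ν (f * g) (eps ν g) := by
    refine Or.inr ⟨hfgt, ?_, b₁, hb₁1, hwit b₁ hb₁1 hb₁⟩
    intro b hb
    exact mul_bound hν hft hgt hexf hexg hlt.le le_rfl b
  refine ⟨hEps, ?_⟩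
  have hfg_eps : eps ν (f * g) = eps ν g := eps_eq hν hEps
  ext b
  simp only [epsAttain, Set.mem_setOf_eq, hfg_eps]
  constructor
  · rintro ⟨hb1, hb⟩
    refine ⟨hb1, ?_⟩
    by_contra hcon
    have hglt : ν g < ν (hasseDeriv b g) + b • eps ν g :=
      lt_of_le_of_ne (hbg b hb1) hcon
    -- every term of ∂_b (f*g) is strictly above ν(fg) - b • eps g
    have hterm : ∀ s ∈ Finset.HasAntidiagonal.antidiagonal b,
        ν (f * g) < ν (hasseDeriv s.1 f * hasseDeriv s.2 g) + b • eps ν g := by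
      rintro ⟨i, j⟩ hs
      have hij : i + j = b := Finset.HasAntidiagonal.mem_antidiagonal.mp hs
      rcases Nat.eq_zero_or_pos i with rfl | hi1
      · have hj : j = b := by omega
        subst hj
        rw [hν.2.1, hν.2.1, hasseDeriv_zero', add_assoc]
        exact WithTop.add_lt_add_left hft hglt
      · rw [hν.2.1, hν.2.1]
        have := strict_term_lt hν hft hgt hexf hexg hlt (j := j) hi1
        rw [hij] at this
        exact this
    obtain ⟨s₁, hs₁, hmin⟩ := Finset.exists_min_image (Finset.HasAntidiagonal.antidiagonal b)
      (fun ij => ν (hasseDeriv ij.1 f * hasseDeriv ij.2 g)) ⟨(0, b), by simp⟩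
    have : ν (f * g) < ν (hasseDeriv b (f * g)) + b • eps ν g := by
      refine lt_of_lt_of_le (hterm s₁ hs₁) (add_le_add_left ?_ _)
      rw [hasseDeriv_mul]
      exact val_sum_ge hν _ _ _ hmin
    rw [← hb] at this
    exact absurd this (lt_irrefl _)
  · rintro ⟨hb1, hb⟩
    exact ⟨hb1, hwit b hb1 hb⟩

lemma main_eq (hν : IsValuation ν) {f g : K[X]} (hft : ν f ≠ ⊤) (hgt : ν g ≠ ⊤)
    (hexf : ∃ e : WithTop Λ, IsEps ν f e) (hexg : ∃ e : WithTop Λ, IsEps ν g e)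
    (heq : eps ν f = eps ν g) : IsEps ν (f * g) (eps ν g) := by
  obtain ⟨hbf, hwf, heft⟩ := isEps_elim hν hft hexf
  obtain ⟨hbg, hwg, hegt⟩ := isEps_elim hν hgt hexg
  have hfgt : ν (f * g) ≠ ⊤ := by
    rw [hν.2.1]
    exact WithTop.add_ne_top.mpr ⟨hft, hgt⟩
  -- maxima of the attainment sets
  have hSf : (epsAttain ν f).Nonempty := hwf
  have hSg : (epsAttain ν g).Nonempty := hwg
  have hbddf : BddAbove (epsAttain ν f) := by
    refine ⟨f.natDegree, fun b hb => ?_⟩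
    by_contra hcon
    have h0 : hasseDeriv b f = 0 := hasse_zero_of_gt (by omega)
    have := hb.2
    rw [h0, hν.1, top_add] at this
    exact hft this
  have hbddg : BddAbove (epsAttain ν g) := by
    refine ⟨g.natDegree, fun b hb => ?_⟩
    by_contra hcon
    have h0 : hasseDeriv b g = 0 := hasse_zero_of_gt (by omega)
    have := hb.2
    rw [h0, hν.1, top_add] at this
    exact hgt this
  set p := sSup (epsAttain ν f) with hp
  set q := sSup (epsAttain ν g) with hq
  have hpmem : p ∈ epsAttain ν f := Nat.sSup_mem hSf hbddf
  have hqmem : q ∈ epsAttain ν g := Nat.sSup_mem hSg hbddg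
  have hple : ∀ b ∈ epsAttain ν f, b ≤ p := fun b hb => le_csSup hbddf hb
  have hqle : ∀ b ∈ epsAttain ν g, b ≤ q := fun b hb => le_csSup hbddg hb
  obtain ⟨hp1, hpval⟩ := hpmem
  obtain ⟨hq1, hqval⟩ := hqmem
  -- strict bounds off the attainment sets (using ε(f) = ε(g) =: E)
  set E := eps ν g with hE
  rw [heq] at hpval
  have hsf : ∀ i : ℕ, 1 ≤ i → i ∉ epsAttain ν f →
      ν f < ν (hasseDeriv i f) + i • E := by
    intro i hi1 hi
    refine lt_of_le_of_ne (heq ▸ hbf i hi1) ?_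
    intro hcon
    exact hi ⟨hi1, heq ▸ hcon⟩
  have hsg : ∀ j : ℕ, 1 ≤ j → j ∉ epsAttain ν g →
      ν g < ν (hasseDeriv j g) + j • E := by
    intro j hj1 hj
    refine lt_of_le_of_ne (hbg j hj1) ?_
    intro hcon
    exact hj ⟨hj1, hcon⟩
  -- value of ν f + ν g in terms of the (p, q) term
  have hsum_eq : ν f + ν g = (ν (hasseDeriv p f) + ν (hasseDeriv q g)) + (p + q) • E := by
    rw [hpval, hqval, add_nsmul, add_add_add_comm]
  -- strict inequality for every other term on the antidiagonal of p + q
  have hterm : ∀ s ∈ Finset.HasAntidiagonal.antidiagonal (p + q), s ≠ (p, q) →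
      ν f + ν g < (ν (hasseDeriv s.1 f) + ν (hasseDeriv s.2 g)) + (p + q) • E := by
    rintro ⟨i, j⟩ hs hne
    have hij : i + j = p + q := Finset.HasAntidiagonal.mem_antidiagonal.mp hs
    have hcase : p < i ∨ q < j := by
      by_contra hcon
      push_neg at hcon
      have : i = p ∧ j = q := by omega
      exact hne (by simp [this.1, this.2])
    rcases hcase with hcase | hcase
    · have hi1 : 1 ≤ i := by omega
      have hnf : i ∉ epsAttain ν f := fun hmem => absurd (hple i hmem) (by omega)
      calc ν f + ν g
          < (ν (hasseDeriv i f) + i • E) + (ν (hasseDeriv j g) + j • E) :=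
            wt_add_lt_add hft hgt (hsf i hi1 hnf)
              (bound_all hν hgt hexg le_rfl j)
        _ = (ν (hasseDeriv i f) + ν (hasseDeriv j g)) + (i + j) • E := by
            rw [add_nsmul, add_add_add_comm]
        _ = (ν (hasseDeriv i f) + ν (hasseDeriv j g)) + (p + q) • E := by rw [hij]
    · have hj1 : 1 ≤ j := by omega
      have hng : j ∉ epsAttain ν g := fun hmem => absurd (hqle j hmem) (by omega)
      calc ν f + ν g = ν g + ν f := add_comm _ _
        _ < (ν (hasseDeriv j g) + j • E) + (ν (hasseDeriv i f) + i • E) :=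
            wt_add_lt_add hgt hft (hsg j hj1 hng)
              (bound_all hν hft hexf heq.le i)
        _ = (ν (hasseDeriv i f) + ν (hasseDeriv j g)) + (i + j) • E := by
            rw [add_nsmul, add_add_add_comm, add_comm (ν (hasseDeriv j g)) _,
              add_comm (j • E) _]
        _ = (ν (hasseDeriv i f) + ν (hasseDeriv j g)) + (p + q) • E := by rw [hij]
  -- the (p, q) term is the unique minimum
  have hEne : (p + q) • E ≠ ⊤ := wt_nsmul_ne_top hegt
  have hmineq : ν (hasseDeriv (p + q) (f * g)) = ν (hasseDeriv p f) + ν (hasseDeriv q g) := by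
    rw [hasseDeriv_mul]
    have := val_sum_eq hν (Finset.HasAntidiagonal.antidiagonal (p + q))
      (fun ij => hasseDeriv ij.1 f * hasseDeriv ij.2 g) (p, q) (by simp) ?_
    · rw [this, hν.2.1]
    · rintro s hs hne
      have h1 := hterm s hs hne
      rw [hsum_eq] at h1
      have h2 := (WithTop.add_lt_add_iff_right hEne).mp h1
      rw [hν.2.1, hν.2.1]
      exact h2
  refine Or.inr ⟨hfgt, ?_, p + q, by omega, ?_⟩
  · intro b hb
    exact mul_bound hν hft hgt hexf hexg heq.le le_rfl b
  · rw [hmineq, hν.2.1, ← hsum_eq]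

end Stmt1Aux

/-- `ε(fg) = max (ε(f), ε(g))`; moreover if `ε(f) < ε(g) < ∞` then
`I(fg) = I(g)`. -/
theorem stmt1 (ν : K[X] → WithTop Λ) (hν : IsValuation ν)
    (f g : K[X]) (hf : 0 < f.natDegree) (hg : 0 < g.natDegree) :
    eps ν (f * g) = max (eps ν f) (eps ν g) ∧
      (eps ν f < eps ν g → eps ν g < ⊤ → epsAttain ν (f * g) = epsAttain ν g) := by
  have hexf : ∃ e : WithTop Λ, IsEps ν f e := exists_isEps hν f hf
  have hexg : ∃ e : WithTop Λ, IsEps ν g e := exists_isEps hν g hg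
  rcases eq_or_ne (ν f) ⊤ with hft | hft
  · have hfg : ν (f * g) = ⊤ := by rw [hν.2.1, hft, top_add]
    have h1 : eps ν f = ⊤ := eps_of_top hν hft
    have h2 : eps ν (f * g) = ⊤ := eps_of_top hν hfg
    refine ⟨by rw [h1, h2, max_eq_left le_top], fun hlt _ => ?_⟩
    rw [h1] at hlt
    exact absurd hlt (not_top_lt)
  rcases eq_or_ne (ν g) ⊤ with hgt | hgt
  · have hfg : ν (f * g) = ⊤ := by rw [hν.2.1, hgt, add_top]
    have h1 : eps ν g = ⊤ := eps_of_top hν hgt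
    have h2 : eps ν (f * g) = ⊤ := eps_of_top hν hfg
    refine ⟨by rw [h1, h2, max_eq_right le_top], fun _ hlt => ?_⟩
    rw [h1] at hlt
    exact absurd hlt (lt_irrefl _)
  rcases lt_trichotomy (eps ν f) (eps ν g) with h | h | h
  · obtain ⟨hEps, hAtt⟩ := main_strict hν hft hgt hexf hexg h
    exact ⟨by rw [eps_eq hν hEps, max_eq_right h.le], fun _ _ => hAtt⟩
  · refine ⟨by rw [eps_eq hν (main_eq hν hft hgt hexf hexg h), h, max_self],
      fun hlt _ => absurd (h ▸ hlt) (lt_irrefl _)⟩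
  · obtain ⟨hEps, _⟩ := main_strict hν hgt hft hexg hexf h
    rw [mul_comm g f] at hEps
    exact ⟨by rw [eps_eq hν hEps, max_eq_left h.le],
      fun hlt _ => absurd (hlt.trans h) (lt_irrefl _)⟩

end KeyPolPaper
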